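/- For every integer p ≥ 1 there is a constant C(p) such that for all λ > 0, the p-dimensional Lebesgue measure of the set { (u_1,...,u_p) : 0 ≤ u_1 ≤ u_2 ≤ ⋯ ≤ u_p and ∏_{j=1}^p u_j^j ≤ λ } is at most C(p) · λ^{2/(p+1)}. -/

import Mathlib

open MeasureTheory
open scoped ENNReal

noncomputable section Stmt12Aux

/-- exponents: 1,2,...,k at positions 0..k-1 (i.e. j+1), and S at top position k. -/
def s12expo (k : ℕ) (S : ℝ) (j : Fin (k+1)) : ℝ :=
  if (j : ℕ) = k then S else ((j : ℕ) : ℝ) + 1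

def s12Reg (k : ℕ) (S : ℝ) : Set (Fin (k+1) → ℝ) :=
  {u | (∀ i, 0 < u i) ∧ Monotone u ∧ (∏ j, u j ^ s12expo k S j) ≤ 1}

def s12Wt (k : ℕ) (γ : ℝ) (u : Fin (k+1) → ℝ) : ℝ≥0∞ :=
  ENNReal.ofReal (∏ j, u j ^ (-(((j:ℕ):ℝ)+1) * γ))

lemma s12Wt_measurable (k : ℕ) (γ : ℝ) : Measurable (s12Wt k γ) := by
  unfold s12Wt; measurability

lemma s12Reg_measurable (k : ℕ) (S : ℝ) : MeasurableSet (s12Reg k S) := by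
  have h1 : MeasurableSet {u : Fin (k+1) → ℝ | ∀ i, 0 < u i} := by
    rw [Set.setOf_forall]
    exact MeasurableSet.iInter fun i =>
      measurableSet_lt measurable_const (measurable_pi_apply i)
  have h2 : MeasurableSet {u : Fin (k+1) → ℝ | Monotone u} := by
    have : {u : Fin (k+1) → ℝ | Monotone u} =
        ⋂ (p : Fin (k+1) × Fin (k+1)) (_ : p.1 ≤ p.2), {u | u p.1 ≤ u p.2} := by
      ext u
      simp only [Set.mem_setOf_eq, Set.mem_iInter]
      exact ⟨fun h p hp => h hp, fun h a b hab => h (a, b) hab⟩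
    rw [this]
    exact MeasurableSet.iInter fun p => MeasurableSet.iInter fun _ =>
      measurableSet_le (measurable_pi_apply _) (measurable_pi_apply _)
  have h3 : MeasurableSet {u : Fin (k+1) → ℝ | (∏ j, u j ^ s12expo k S j) ≤ 1} := by
    have : Measurable fun u : Fin (k+1) → ℝ => ∏ j, u j ^ s12expo k S j := by
      measurability
    exact measurableSet_le this measurable_const
  exact (h1.inter (h2.inter h3))

/-- basic 1-d estimate -/
lemma s12lint_rpow {M c : ℝ} (hM : 0 < M) (hc : -1 < c) :
    ∫⁻ x in Set.Ioc 0 M, ENNReal.ofReal (x ^ c) ≤ ENNReal.ofReal (M ^ (c+1) / (c+1)) := by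
  have hInt : IntegrableOn (fun x : ℝ => x ^ c) (Set.Ioc 0 M) := by
    rw [← intervalIntegrable_iff_integrableOn_Ioc_of_le hM.le]
    exact intervalIntegral.intervalIntegrable_rpow' hc
  have hnn : 0 ≤ᶠ[ae (volume.restrict (Set.Ioc 0 M))] fun x : ℝ => x ^ c := by
    filter_upwards [self_mem_ae_restrict measurableSet_Ioc] with x hx
    exact Real.rpow_nonneg hx.1.le c
  rw [← ofReal_integral_eq_lintegral_ofReal hInt hnn]
  have : ∫ x in Set.Ioc 0 M, x ^ c = M ^ (c+1) / (c+1) := by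
    rw [← intervalIntegral.integral_of_le hM.le, integral_rpow (Or.inl hc),
      Real.zero_rpow (by linarith)]
    ring
  rw [this]


lemma s12key_base (γ S : ℝ) (hγ0 : 0 ≤ γ) (hγ1 : ((0:ℝ)+1) * γ < 1) (hS : ((0:ℝ)+1) ≤ S) :
    ∫⁻ u, (s12Reg 0 S).indicator (s12Wt 0 γ) u < ⊤ := by
  have hmp := volume_preserving_funUnique (Fin 1) ℝ
  have hmeas : Measurable ((s12Reg 0 S).indicator (s12Wt 0 γ)) :=
    (s12Wt_measurable 0 γ).indicator (s12Reg_measurable 0 S)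
  refine lt_of_eq_of_lt ((hmp.symm _).lintegral_comp hmeas).symm ?_
  have hbd : ∀ x : ℝ, (s12Reg 0 S).indicator (s12Wt 0 γ)
      ((MeasurableEquiv.funUnique (Fin 1) ℝ).symm x)
      ≤ (Set.Ioc (0:ℝ) 1).indicator (fun x => ENNReal.ofReal (x ^ (-γ))) x := by
    intro x
    by_cases hx : ((MeasurableEquiv.funUnique (Fin 1) ℝ).symm x) ∈ s12Reg 0 S
    · rw [Set.indicator_of_mem hx]
      obtain ⟨hpos, hmono, hprod⟩ := hx
      have hx0 : 0 < x := hpos 0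
      have hS0 : (0:ℝ) < S := by linarith
      have hprod' : x ^ S ≤ 1 := by
        have := hprod
        rwa [Fin.prod_univ_one] at this
      have hx1 : x ≤ 1 := by
        by_contra h
        push_neg at h
        have : 1 < x ^ S := (Real.one_lt_rpow_iff_of_pos hx0).2 (Or.inl ⟨h, hS0⟩)
        linarith
      rw [Set.indicator_of_mem (Set.mem_Ioc.mpr ⟨hx0, hx1⟩)]
      apply le_of_eq
      simp [s12Wt, Fin.prod_univ_one]
    · rw [Set.indicator_of_notMem hx]
      exact zero_le
  calc ∫⁻ x : ℝ, (s12Reg 0 S).indicator (s12Wt 0 γ)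
        ((MeasurableEquiv.funUnique (Fin 1) ℝ).symm x)
      ≤ ∫⁻ x : ℝ, (Set.Ioc (0:ℝ) 1).indicator (fun x => ENNReal.ofReal (x ^ (-γ))) x :=
        lintegral_mono hbd
    _ = ∫⁻ x in Set.Ioc (0:ℝ) 1, ENNReal.ofReal (x ^ (-γ)) :=
        lintegral_indicator measurableSet_Ioc _
    _ ≤ ENNReal.ofReal ((1:ℝ) ^ (-γ+1) / (-γ+1)) := s12lint_rpow one_pos (by linarith)
    _ < ⊤ := ENNReal.ofReal_lt_top

lemma s12key_step (k : ℕ)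
    (IH : ∀ γ S : ℝ, 0 ≤ γ → ((k:ℝ)+1) * γ < 1 → ((k:ℝ)+1) ≤ S →
      ∫⁻ u, (s12Reg k S).indicator (s12Wt k γ) u < ⊤)
    (γ S : ℝ) (hγ0 : 0 ≤ γ) (hγ1 : (((k+1:ℕ):ℝ)+1) * γ < 1) (hS : (((k+1:ℕ):ℝ)+1) ≤ S) :
    ∫⁻ u, (s12Reg (k+1) S).indicator (s12Wt (k+1) γ) u < ⊤ := by
  push_cast at hγ1 hS
  set c : ℝ := ((k:ℝ)+2) * γ with hcdef
  clear_value c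
  have hc1 : c < 1 := by rw [hcdef]; linarith
  have hc0 : 0 ≤ c := by rw [hcdef]; positivity
  have hS0 : (0:ℝ) < S := by linarith
  set γ' : ℝ := γ + (1-c)/S with hγ'def
  clear_value γ'
  set S' : ℝ := S + ((k:ℝ)+1) with hS'def
  clear_value S'
  have hγ'0 : 0 ≤ γ' := by
    have : 0 ≤ (1-c)/S := div_nonneg (by linarith) hS0.le
    linarith
  have hγ'1 : ((k:ℝ)+1) * γ' < 1 := by
    have h1 : ((k:ℝ)+1) * γ' = ((k:ℝ)+1)*γ + ((k:ℝ)+1)*((1-c)/S) := by rw [hγ'def]; ring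
    have h2 : ((k:ℝ)+1)*((1-c)/S) ≤ ((k:ℝ)+1)*((1-c)/((k:ℝ)+2)) := by
      apply mul_le_mul_of_nonneg_left _ (by positivity)
      apply div_le_div_of_nonneg_left (by linarith) (by positivity) (by linarith)
    have h3 : ((k:ℝ)+1)*γ + ((k:ℝ)+1)*((1-c)/((k:ℝ)+2)) < 1 := by
      rw [hcdef]
      have hk2 : (0:ℝ) < (k:ℝ)+2 := by positivity
      rw [div_eq_mul_inv]
      have : ((k:ℝ)+1)*γ + ((k:ℝ)+1)*((1-((k:ℝ)+2)*γ) * ((k:ℝ)+2)⁻¹)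
          = ((k:ℝ)+1) * ((k:ℝ)+2)⁻¹ := by
        field_simp
        ring
      rw [this]
      rw [mul_inv_lt_iff₀ hk2]
      linarith
    linarith
  have hS'k : ((k:ℝ)+1) ≤ S' := by rw [hS'def]; linarith
  have IH' := IH γ' S' hγ'0 hγ'1 hS'k
  -- the measurable equiv splitting off the last coordinate
  set e := MeasurableEquiv.piFinSuccAbove (fun _ : Fin (k+2) => ℝ) (Fin.last (k+1)) with hedef
  have hmp := volume_preserving_piFinSuccAbove (fun _ : Fin (k+2) => ℝ) (Fin.last (k+1))
  have hmeas : Measurable ((s12Reg (k+1) S).indicator (s12Wt (k+1) γ)) :=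
    (s12Wt_measurable _ γ).indicator (s12Reg_measurable _ S)
  rw [← (hmp.symm _).lintegral_comp hmeas, Measure.volume_eq_prod,
    lintegral_prod_symm (fun z : ℝ × (Fin (k+1) → ℝ) =>
      (s12Reg (k+1) S).indicator (s12Wt (k+1) γ) (e.symm z))
      ((hmeas.comp e.symm.measurable).aemeasurable)]
  -- evaluation lemmas for e.symm
  have he1 : ∀ (x : ℝ) (w : Fin (k+1) → ℝ), e.symm (x, w) (Fin.last (k+1)) = x := by
    intro x w
    rw [hedef, MeasurableEquiv.piFinSuccAbove_symm_apply]
    simp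
  have he2 : ∀ (x : ℝ) (w : Fin (k+1) → ℝ) (j : Fin (k+1)),
      e.symm (x, w) (Fin.castSucc j) = w j := by
    intro x w j
    rw [hedef, MeasurableEquiv.piFinSuccAbove_symm_apply]
    simp only [Fin.insertNthEquiv_apply]
    rw [← Fin.succAbove_last]
    exact Fin.insertNth_apply_succAbove _ _ _ _
  -- P and M
  set P : (Fin (k+1) → ℝ) → ℝ := fun w => ∏ j, w j ^ (((j:ℕ):ℝ)+1) with hPdef
  set M : (Fin (k+1) → ℝ) → ℝ := fun w => ((P w)⁻¹) ^ S⁻¹ with hMdef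
  have hPpos : ∀ w : Fin (k+1) → ℝ, (∀ i, 0 < w i) → 0 < P w := by
    intro w hw
    exact Finset.prod_pos fun j _ => Real.rpow_pos_of_pos (hw j) _
  -- membership transfer
  have hmem : ∀ (x : ℝ) (w : Fin (k+1) → ℝ), e.symm (x, w) ∈ s12Reg (k+1) S →
      w ∈ s12Reg k S' ∧ 0 < x ∧ x ≤ M w := by
    intro x w hu
    obtain ⟨hpos, hmono, hprod⟩ := hu
    have wpos : ∀ j, 0 < w j := fun j => by rw [← he2 x w j]; exact hpos _
    have wmono : Monotone w := by
      intro a b hab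
      rw [← he2 x w a, ← he2 x w b]
      exact hmono (Fin.castSucc_le_castSucc_iff.mpr hab)
    have hx0 : 0 < x := by rw [← he1 x w]; exact hpos _
    have hwx : w (Fin.last k) ≤ x := by
      rw [← he1 x w, ← he2 x w (Fin.last k)]
      exact hmono (Fin.le_last _)
    rw [Fin.prod_univ_castSucc] at hprod
    have hexpo1 : ∀ j : Fin (k+1), s12expo (k+1) S (Fin.castSucc j) = ((j:ℕ):ℝ)+1 := by
      intro j
      simp only [s12expo, Fin.coe_castSucc]
      rw [if_neg (by omega : ¬ (j:ℕ) = k+1)]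
    have hexpo2 : s12expo (k+1) S (Fin.last (k+1)) = S := by
      simp [s12expo]
    have hPx : P w * x ^ S ≤ 1 := by
      have : (∏ j : Fin (k+1), e.symm (x, w) (Fin.castSucc j) ^ s12expo (k+1) S (Fin.castSucc j))
          = P w := by
        rw [hPdef]
        apply Finset.prod_congr rfl
        intro j _
        rw [he2, hexpo1]
      rwa [this, he1, hexpo2] at hprod
    have hxS : x ^ S ≤ (P w)⁻¹ := by
      rw [← one_div, le_div_iff₀ (hPpos w wpos)]
      nlinarith [hPx]
    have hxM : x ≤ M w := by
      have h2 : (x ^ S) ^ S⁻¹ ≤ ((P w)⁻¹) ^ S⁻¹ :=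
        Real.rpow_le_rpow (Real.rpow_nonneg hx0.le S) hxS (by positivity)
      rwa [Real.rpow_rpow_inv hx0.le hS0.ne'] at h2
    refine ⟨⟨wpos, wmono, ?_⟩, hx0, hxM⟩
    -- product condition for w
    have e1 : ∀ j : Fin k, s12expo k S' (Fin.castSucc j) = ((j:ℕ):ℝ)+1 := by
      intro j
      simp only [s12expo, Fin.coe_castSucc]
      rw [if_neg (by omega : ¬ (j:ℕ) = k)]
    have e2 : s12expo k S' (Fin.last k) = S' := by simp [s12expo]
    have hP : P w = (∏ j : Fin k, w j.castSucc ^ (((j:ℕ):ℝ)+1)) * w (Fin.last k) ^ (((k:ℕ):ℝ)+1) := by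
      simp only [hPdef]
      rw [Fin.prod_univ_castSucc]
      simp [Fin.coe_castSucc, Fin.val_last]
    have e3 : (∏ j : Fin k, w j.castSucc ^ s12expo k S' j.castSucc)
        = ∏ j : Fin k, w j.castSucc ^ (((j:ℕ):ℝ)+1) :=
      Finset.prod_congr rfl fun j _ => by rw [e1 j]
    have hsplit : (∏ j, w j ^ s12expo k S' j) = P w * w (Fin.last k) ^ S := by
      rw [Fin.prod_univ_castSucc, e2, e3, hP, hS'def, Real.rpow_add (wpos _)]
      push_cast
      ring
    rw [hsplit]
    have hwxS : w (Fin.last k) ^ S ≤ x ^ S := Real.rpow_le_rpow (wpos _).le hwx hS0.le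
    calc P w * w (Fin.last k) ^ S ≤ P w * x ^ S :=
          mul_le_mul_of_nonneg_left hwxS (hPpos w wpos).le
      _ ≤ 1 := hPx
  -- the bound function
  have hB : ∀ w : Fin (k+1) → ℝ,
      (∫⁻ x : ℝ, (s12Reg (k+1) S).indicator (s12Wt (k+1) γ) (e.symm (x, w)))
      ≤ (s12Reg k S').indicator
          (fun w => ENNReal.ofReal ((1-c)⁻¹) * s12Wt k γ' w) w := by
    intro w
    by_cases hw : w ∈ s12Reg k S'
    · have hwpos : ∀ i, 0 < w i := hw.1
      have hPw : 0 < P w := hPpos w hwpos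
      have hMw : 0 < M w := by
        rw [hMdef]
        exact Real.rpow_pos_of_pos (inv_pos.mpr hPw) _
      have hpt : ∀ x : ℝ, (s12Reg (k+1) S).indicator (s12Wt (k+1) γ) (e.symm (x, w))
          ≤ (Set.Ioc (0:ℝ) (M w)).indicator (fun x => ENNReal.ofReal (x ^ (-c))) x
            * ENNReal.ofReal (∏ j, w j ^ (-(((j:ℕ):ℝ)+1) * γ)) := by
        intro x
        by_cases hu : e.symm (x, w) ∈ s12Reg (k+1) S
        · obtain ⟨-, hx0, hxM⟩ := hmem x w hu
          rw [Set.indicator_of_mem hu, Set.indicator_of_mem (Set.mem_Ioc.mpr ⟨hx0, hxM⟩)]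
          have hwt : s12Wt (k+1) γ (e.symm (x, w))
              = ENNReal.ofReal (x ^ (-c) * ∏ j, w j ^ (-(((j:ℕ):ℝ)+1) * γ)) := by
            simp only [s12Wt]
            rw [Fin.prod_univ_castSucc]
            congr 1
            have hx : e.symm (x, w) (Fin.last (k+1)) ^ (-((((Fin.last (k+1)):ℕ):ℝ)+1) * γ)
                = x ^ (-c) := by
              rw [he1, Fin.val_last, hcdef]
              push_cast
              ring_nf
            rw [hx]
            have : (∏ j : Fin (k+1),
                e.symm (x, w) (Fin.castSucc j) ^ (-((((Fin.castSucc j : Fin (k+2)):ℕ):ℝ)+1) * γ))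
                = ∏ j, w j ^ (-(((j:ℕ):ℝ)+1) * γ) := by
              apply Finset.prod_congr rfl
              intro j _
              rw [he2, Fin.coe_castSucc]
            rw [this]
            ring
          rw [hwt, ENNReal.ofReal_mul (Real.rpow_nonneg hx0.le _)]
        · rw [Set.indicator_of_notMem hu]
          exact zero_le
      have hchain : (∫⁻ x : ℝ, (s12Reg (k+1) S).indicator (s12Wt (k+1) γ) (e.symm (x, w)))
          ≤ ENNReal.ofReal ((M w) ^ (-c+1) / (-c+1))
            * ENNReal.ofReal (∏ j, w j ^ (-(((j:ℕ):ℝ)+1) * γ)) := by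
        calc (∫⁻ x : ℝ, (s12Reg (k+1) S).indicator (s12Wt (k+1) γ) (e.symm (x, w)))
            ≤ ∫⁻ x : ℝ, (Set.Ioc (0:ℝ) (M w)).indicator (fun x => ENNReal.ofReal (x ^ (-c))) x
              * ENNReal.ofReal (∏ j, w j ^ (-(((j:ℕ):ℝ)+1) * γ)) := lintegral_mono hpt
          _ = (∫⁻ x in Set.Ioc (0:ℝ) (M w), ENNReal.ofReal (x ^ (-c)))
              * ENNReal.ofReal (∏ j, w j ^ (-(((j:ℕ):ℝ)+1) * γ)) := by
              rw [lintegral_mul_const' _ _ ENNReal.ofReal_ne_top,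
                lintegral_indicator measurableSet_Ioc]
          _ ≤ ENNReal.ofReal ((M w) ^ (-c+1) / (-c+1))
              * ENNReal.ofReal (∏ j, w j ^ (-(((j:ℕ):ℝ)+1) * γ)) :=
              mul_le_mul_left (s12lint_rpow hMw (by linarith)) _
      rw [Set.indicator_of_mem hw]
      refine le_trans hchain (le_of_eq ?_)
      -- real computation
      rw [← ENNReal.ofReal_mul (div_nonneg (Real.rpow_nonneg hMw.le _) (by linarith))]
      have hwt' : s12Wt k γ' w = ENNReal.ofReal (∏ j, w j ^ (-(((j:ℕ):ℝ)+1) * γ')) := rfl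
      rw [hwt', ← ENNReal.ofReal_mul (inv_nonneg.mpr (by linarith : (0:ℝ) ≤ 1 - c))]
      congr 1
      set t : ℝ := S⁻¹ * (1-c) with htdef
      have hMc : (M w) ^ (-c+1) = ∏ j, w j ^ (-(((j:ℕ):ℝ)+1) * t) := by
        rw [hMdef]
        have h1 : ((P w)⁻¹ ^ S⁻¹) ^ (-c+1) = (P w)⁻¹ ^ t := by
          rw [← Real.rpow_mul (by positivity), htdef]
          ring_nf
        rw [h1]
        have h2 : (∏ j, w j ^ (-(((j:ℕ):ℝ)+1) * t)) = (∏ j, w j ^ ((((j:ℕ):ℝ)+1))) ^ (-t) := by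
          rw [← Real.finset_prod_rpow _ _ (fun j _ => Real.rpow_nonneg (hwpos j).le _)]
          apply Finset.prod_congr rfl
          intro j _
          rw [← Real.rpow_mul (hwpos j).le]
          ring_nf
        rw [h2, hPdef, Real.rpow_neg (hPpos w hwpos).le, ← Real.inv_rpow (hPpos w hwpos).le]
      rw [hMc]
      have h3 : (∏ j, w j ^ (-(((j:ℕ):ℝ)+1) * t)) * (∏ j, w j ^ (-(((j:ℕ):ℝ)+1) * γ))
          = ∏ j, w j ^ (-(((j:ℕ):ℝ)+1) * γ') := by
        rw [← Finset.prod_mul_distrib]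
        apply Finset.prod_congr rfl
        intro j _
        rw [← Real.rpow_add (hwpos j)]
        congr 1
        rw [hγ'def, htdef]
        field_simp
        ring
      rw [show (-c+1 : ℝ) = 1-c by ring, ← h3, div_eq_mul_inv]
      ring
    · have hz : ∀ x : ℝ, (s12Reg (k+1) S).indicator (s12Wt (k+1) γ) (e.symm (x, w)) = 0 :=
        fun x => Set.indicator_of_notMem (fun hu => hw (hmem x w hu).1) _
      rw [Set.indicator_of_notMem hw]
      simp only [hz]
      simp
  calc (∫⁻ w, ∫⁻ x : ℝ, (s12Reg (k+1) S).indicator (s12Wt (k+1) γ) (e.symm (x, w)))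
      ≤ ∫⁻ w, (s12Reg k S').indicator
          (fun w => ENNReal.ofReal ((1-c)⁻¹) * s12Wt k γ' w) w := lintegral_mono hB
    _ = ENNReal.ofReal ((1-c)⁻¹) * ∫⁻ w, (s12Reg k S').indicator (s12Wt k γ') w := by
        rw [lintegral_indicator (s12Reg_measurable k S'),
          lintegral_indicator (s12Reg_measurable k S'),
          lintegral_const_mul' _ _ ENNReal.ofReal_ne_top]
    _ < ⊤ := ENNReal.mul_lt_top ENNReal.ofReal_lt_top IH'

lemma s12key : ∀ (k : ℕ) (γ S : ℝ), 0 ≤ γ → ((k:ℝ)+1) * γ < 1 → ((k:ℝ)+1) ≤ S →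
    ∫⁻ u, (s12Reg k S).indicator (s12Wt k γ) u < ⊤ := by
  intro k
  induction k with
  | zero =>
    intro γ S hγ0 hγ1 hS
    exact s12key_base γ S hγ0 (by push_cast at hγ1 ⊢; linarith) (by push_cast at hS ⊢; linarith)
  | succ k IH =>
    intro γ S hγ0 hγ1 hS
    exact s12key_step k IH γ S hγ0 hγ1 hS

lemma s12sum (p : ℕ) : (∑ j ∈ Finset.range p, (j+1)) * 2 = p * (p+1) := by
  induction p with
  | zero => simp
  | succ n ih => rw [Finset.sum_range_succ, add_mul, ih]; ring

end Stmt12Aux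

open Pointwise in
/-- for every p ≥ 1 there is C(p) such that for all λ > 0 the Lebesgue measure
of { (u_1,...,u_p) : 0 ≤ u_1 ≤ ⋯ ≤ u_p, ∏_{j=1}^p u_j^j ≤ λ } is at most C(p)·λ^{2/(p+1)}. -/
theorem stmt_12 (p : ℕ) (hp : 1 ≤ p) :
    ∃ C : ℝ, 0 < C ∧ ∀ lam : ℝ, 0 < lam →
      volume {u : Fin p → ℝ | (∀ i, 0 ≤ u i) ∧ Monotone u ∧ (∏ j : Fin p, u j ^ ((j : ℕ) + 1)) ≤ lam}
        ≤ ENNReal.ofReal (C * lam ^ ((2 : ℝ) / ((p : ℝ) + 1))) := by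
  obtain ⟨k, rfl⟩ : ∃ k, p = k + 1 := ⟨p - 1, by omega⟩
  set A : ℝ → Set (Fin (k+1) → ℝ) := fun lam =>
    {u | (∀ i, 0 ≤ u i) ∧ Monotone u ∧ (∏ j : Fin (k+1), u j ^ ((j : ℕ) + 1)) ≤ lam} with hAdef
  have hA1 : volume (A 1) < ⊤ := by
    have hsub : A 1 ⊆ s12Reg k ((k:ℝ)+1) ∪ ⋃ i, {u : Fin (k+1) → ℝ | u i = 0} := by
      intro u hu
      by_cases hz : ∀ i, 0 < u i
      · left
        refine ⟨hz, hu.2.1, ?_⟩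
        have heq : (∏ j, u j ^ s12expo k ((k:ℝ)+1) j) = ∏ j : Fin (k+1), u j ^ ((j:ℕ)+1) := by
          apply Finset.prod_congr rfl
          intro j _
          have hexpo : s12expo k ((k:ℝ)+1) j = (((j:ℕ):ℝ)+1) := by
            simp only [s12expo]
            split
            · rename_i h; rw [h]
            · rfl
          rw [hexpo, show (((j:ℕ):ℝ)+1) = (((j:ℕ)+1 : ℕ):ℝ) by push_cast; ring,
            Real.rpow_natCast]
        rw [heq]
        exact hu.2.2
      · right
        push_neg at hz
        obtain ⟨i, hi⟩ := hz
        exact Set.mem_iUnion.mpr ⟨i, le_antisymm hi (hu.1 i)⟩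
    have hnull : volume (⋃ i, {u : Fin (k+1) → ℝ | u i = 0}) = 0 := by
      refine le_antisymm (le_trans (measure_iUnion_le _) ?_) zero_le
      have : ∀ i : Fin (k+1), volume {u : Fin (k+1) → ℝ | u i = 0} = 0 := by
        intro i
        rw [volume_pi]
        exact Measure.pi_hyperplane _ i 0
      simp [this]
    have hReg : volume (s12Reg k ((k:ℝ)+1)) < ⊤ := by
      have h1 : s12Wt k 0 = fun _ => 1 := by
        funext u
        simp [s12Wt, mul_zero, Real.rpow_zero]
      have h2 := s12key k 0 ((k:ℝ)+1) le_rfl (by norm_num) le_rfl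
      rw [h1, lintegral_indicator (s12Reg_measurable k ((k:ℝ)+1))] at h2
      rwa [setLIntegral_one] at h2
    calc volume (A 1) ≤ volume (s12Reg k ((k:ℝ)+1)) + volume (⋃ i, {u : Fin (k+1) → ℝ | u i = 0}) :=
          le_trans (measure_mono hsub) (measure_union_le _ _)
      _ = volume (s12Reg k ((k:ℝ)+1)) := by rw [hnull, add_zero]
      _ < ⊤ := hReg
  refine ⟨(volume (A 1)).toReal + 1, by positivity, ?_⟩
  intro lam hlam
  set T : ℕ := ∑ j ∈ Finset.range (k+1), (j+1) with hTdef
  have hTpos : 0 < T := by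
    rw [hTdef]
    have : 0 ∈ Finset.range (k+1) := by simp
    exact Finset.sum_pos' (fun i _ => by omega) ⟨0, this, by omega⟩
  have hT2 : (T:ℝ) * 2 = ((k:ℝ)+1) * (((k:ℝ)+1)+1) := by
    have := s12sum (k+1)
    have h := congrArg (fun n : ℕ => (n:ℝ)) this
    push_cast at h
    rw [hTdef]
    push_cast
    linarith [h]
  set r : ℝ := lam ^ ((T:ℝ)⁻¹) with hrdef
  have hr : 0 < r := Real.rpow_pos_of_pos hlam _
  have hrT : r ^ T = lam := by
    rw [hrdef, ← Real.rpow_natCast (lam ^ ((T:ℝ)⁻¹)) T, ← Real.rpow_mul hlam.le,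
      inv_mul_cancel₀ (by exact_mod_cast hTpos.ne' : (T:ℝ) ≠ 0), Real.rpow_one]
  have hsub : A lam ⊆ r • A 1 := by
    intro u hu
    refine Set.mem_smul_set.mpr ⟨r⁻¹ • u, ⟨?_, ?_, ?_⟩, smul_inv_smul₀ hr.ne' u⟩
    · intro i
      exact mul_nonneg (inv_nonneg.mpr hr.le) (hu.1 i)
    · intro a b hab
      exact mul_le_mul_of_nonneg_left (hu.2.1 hab) (inv_nonneg.mpr hr.le)
    · have hprod : (∏ j : Fin (k+1), (r⁻¹ • u) j ^ ((j:ℕ)+1))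
          = r⁻¹ ^ T * ∏ j : Fin (k+1), u j ^ ((j:ℕ)+1) := by
        have : ∀ j : Fin (k+1), (r⁻¹ • u) j ^ ((j:ℕ)+1) = r⁻¹ ^ ((j:ℕ)+1) * u j ^ ((j:ℕ)+1) := by
          intro j
          rw [Pi.smul_apply, smul_eq_mul, mul_pow]
        rw [Finset.prod_congr rfl (fun j _ => this j), Finset.prod_mul_distrib,
          Finset.prod_pow_eq_pow_sum]
        congr 2
        rw [hTdef]
        exact Fin.sum_univ_eq_sum_range (fun m => m+1) (k+1)
      rw [hprod, inv_pow, hrT]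
      rw [inv_mul_le_iff₀ hlam, mul_one]
      exact hu.2.2
  have hsmul : volume (r • A 1) = ENNReal.ofReal (r ^ (k+1)) * volume (A 1) := by
    rw [Measure.addHaar_smul volume r (A 1)]
    congr 2
    rw [Module.finrank_fin_fun ℝ]
    rw [abs_of_nonneg (by positivity)]
  have hrk : r ^ (k+1) = lam ^ ((2:ℝ) / (((k:ℕ):ℝ)+1+1)) := by
    rw [hrdef, ← Real.rpow_natCast (lam ^ ((T:ℝ)⁻¹)) (k+1), ← Real.rpow_mul hlam.le]
    congr 1
    have hT0 : (T:ℝ) ≠ 0 := by exact_mod_cast hTpos.ne'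
    have hk2 : ((k:ℝ)+1)+1 ≠ 0 := by positivity
    field_simp
    push_cast
    nlinarith [hT2]
  calc volume (A lam) ≤ volume (r • A 1) := measure_mono hsub
    _ = ENNReal.ofReal (r ^ (k+1)) * volume (A 1) := hsmul
    _ ≤ ENNReal.ofReal (r ^ (k+1)) * ENNReal.ofReal ((volume (A 1)).toReal + 1) := by
        apply mul_le_mul_right
        conv_lhs => rw [← ENNReal.ofReal_toReal hA1.ne]
        exact ENNReal.ofReal_le_ofReal (by linarith [ENNReal.toReal_nonneg (a := volume (A 1))])
    _ = ENNReal.ofReal (((volume (A 1)).toReal + 1) * lam ^ ((2:ℝ) / (((k:ℕ):ℝ)+1+1))) := by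
        rw [hrk, ← ENNReal.ofReal_mul (by positivity), mul_comm]
    _ ≤ ENNReal.ofReal (((volume (A 1)).toReal + 1) * lam ^ ((2:ℝ) / ((((k+1):ℕ):ℝ)+1))) := by
        apply ENNReal.ofReal_le_ofReal
        apply le_of_eq
        congr 2
        push_cast
        ring
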